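/- Let H ⊆ ℂ be an open half-plane whose boundary contains the origin, and let f ∈ ℂ[z₁,…,zₙ] be H-stable, i.e. f(z₁,…,zₙ) ≠ 0 whenever zᵢ ∈ H for all i. Then either ∂f/∂z₁ is the zero polynomial or ∂f/∂z₁ is H-stable. -/

import Mathlib

section Univariate
open Polynomial

lemma re_inv_pos {w ζ : ℂ} (h : 0 < (w * ζ).re) : 0 < ((starRingEnd ℂ w) * ζ⁻¹).re := by
  have hζ : ζ ≠ 0 := by rintro rfl; simp at h
  have hsq : (0:ℝ) < Complex.normSq ζ := Complex.normSq_pos.mpr hζ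
  have : (starRingEnd ℂ w) * ζ⁻¹ = (starRingEnd ℂ (w * ζ)) * (((Complex.normSq ζ)⁻¹ : ℝ) : ℂ) := by
    rw [Complex.inv_def, map_mul, Complex.ofReal_inv]
    ring
  rw [this]
  have : ((starRingEnd ℂ (w * ζ)) * (((Complex.normSq ζ)⁻¹ : ℝ) : ℂ)).re
      = (w * ζ).re * (Complex.normSq ζ)⁻¹ := by
    simp [Complex.mul_re, Complex.conj_re, Complex.conj_im]
  rw [this]
  positivity

lemma list_sum_re_pos {l : List ℂ} (hne : l ≠ []) (h : ∀ x ∈ l, 0 < x.re) : 0 < l.sum.re := by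
  induction l with
  | nil => simp at hne
  | cons a l ih =>
    rcases eq_or_ne l [] with rfl | hl
    · simpa using h a (by simp)
    · have := ih hl (fun x hx => h x (List.mem_cons_of_mem _ hx))
      have ha := h a (by simp)
      simp only [List.sum_cons, Complex.add_re]
      linarith

lemma eval_derivative_list_prod (l : List ℂ) (t : ℂ) (h : ∀ r ∈ l, t - r ≠ 0) :
    Polynomial.eval t (Polynomial.derivative (l.map (fun r => X - C r)).prod) =
      Polynomial.eval t (l.map (fun r => X - C r)).prod * (l.map (fun r => (t - r)⁻¹)).sum := by
  induction l with
  | nil => simp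
  | cons a l ih =>
    have ha : t - a ≠ 0 := h a (by simp)
    have ih' := ih (fun r hr => h r (List.mem_cons_of_mem _ hr))
    simp only [List.map_cons, List.prod_cons, derivative_mul, derivative_sub, derivative_X,
      derivative_C, sub_zero, one_mul, eval_add, eval_mul, eval_sub, eval_X, eval_C, List.sum_cons,
      ih']
    field_simp

lemma univ_deriv_stable (w : ℂ) (φ : Polynomial ℂ)
    (hst : ∀ t : ℂ, 0 < (w * t).re → φ.eval t ≠ 0) (hdeg : 1 ≤ φ.natDegree)
    {t : ℂ} (ht : 0 < (w * t).re) : (Polynomial.derivative φ).eval t ≠ 0 := by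
  have hφ : φ ≠ 0 := fun h => by simp [h] at hdeg
  have hroots : Multiset.card φ.roots = φ.natDegree :=
    Polynomial.splits_iff_card_roots.mp (IsAlgClosed.splits φ)
  have heq := Polynomial.C_leadingCoeff_mul_prod_multiset_X_sub_C hroots
  set l := φ.roots.toList with hl
  have hlr : (φ.roots.map fun a => X - C a).prod = (l.map (fun r => X - C r)).prod := by
    conv_lhs => rw [← Multiset.coe_toList φ.roots]
    rw [Multiset.map_coe, Multiset.prod_coe, hl]
  have hne : l ≠ [] := by
    intro h0
    rw [hl] at h0
    have : φ.roots = 0 := by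
      rw [← Multiset.coe_toList φ.roots, h0]; rfl
    rw [this] at hroots
    simp at hroots
    omega
  have hroot_mem : ∀ r ∈ l, 0 < (w * (t - r)).re := by
    intro r hr
    have hrr : r ∈ φ.roots := by rw [hl] at hr; rwa [← Multiset.mem_toList]
    have : φ.eval r = 0 := (Polynomial.mem_roots hφ).mp hrr
    have hrre : ¬ 0 < (w * r).re := fun hc => hst r hc this
    have : (w * (t - r)).re = (w * t).re - (w * r).re := by
      rw [mul_sub, Complex.sub_re]
    rw [this]
    push_neg at hrre
    linarith
  have hsub : ∀ r ∈ l, t - r ≠ 0 := by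
    intro r hr h0
    have := hroot_mem r hr
    rw [h0, mul_zero] at this
    simp at this
  have hevalφ : φ.eval t ≠ 0 := hst t ht
  set S := (l.map (fun r => (t - r)⁻¹)).sum with hS
  have hSne : S ≠ 0 := by
    intro h0
    have h1 : ((starRingEnd ℂ w) * S).re > 0 := by
      have : (starRingEnd ℂ w) * S = (l.map (fun r => (starRingEnd ℂ w) * (t - r)⁻¹)).sum := by
        rw [hS, ← List.sum_map_mul_left]
      rw [this]
      apply list_sum_re_pos
      · simpa using hne
      · intro x hx
        simp only [List.mem_map] at hx
        obtain ⟨r, hr, rfl⟩ := hx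
        exact re_inv_pos (hroot_mem r hr)
    rw [h0, mul_zero] at h1
    simp at h1
  have key : (Polynomial.derivative φ).eval t = φ.eval t * S := by
    conv_lhs => rw [← heq]
    rw [hlr, derivative_mul, derivative_C, zero_mul, zero_add, eval_mul, eval_C,
      eval_derivative_list_prod l t hsub, ← hS]
    conv_rhs => rw [← heq, hlr]
    rw [eval_mul, eval_C]
    ring
  rw [key]
  exact mul_ne_zero hevalφ hSne

end Univariate

open MvPolynomial Metric

lemma finSuccEquiv_pderiv_zero {n : ℕ} (f : MvPolynomial (Fin (n + 1)) ℂ) :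
    finSuccEquiv ℂ n (pderiv 0 f) = Polynomial.derivative (finSuccEquiv ℂ n f) := by
  induction f using MvPolynomial.induction_on with
  | C a => simp [finSuccEquiv_apply, pderiv_C]
  | add p q hp hq => simp [map_add, hp, hq]
  | mul_X p i hp =>
    rw [pderiv_mul, map_add, map_mul, map_mul, hp, map_mul, Polynomial.derivative_mul]
    induction i using Fin.cases with
    | zero =>
      rw [pderiv_X_self, finSuccEquiv_X_zero]
      simp
    | succ j =>
      rw [pderiv_X_of_ne (Fin.succ_ne_zero j), finSuccEquiv_X_succ]
      simp

lemma halfplane_infinite (w : ℂ) (hw : w ≠ 0) : {t : ℂ | 0 < (w * t).re}.Infinite := by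
  have hinj : Set.InjOn (fun x : ℝ => (x : ℂ) * (starRingEnd ℂ w)) (Set.Ioi 0) := by
    intro a _ b _ hab
    have := mul_right_cancel₀ (star_ne_zero.mpr hw : (starRingEnd ℂ w) ≠ 0) hab
    exact_mod_cast this
  have hsub : (fun x : ℝ => (x : ℂ) * (starRingEnd ℂ w)) '' (Set.Ioi 0) ⊆ {t : ℂ | 0 < (w * t).re} := by
    rintro _ ⟨x, hx, rfl⟩
    have : (w * ((x : ℂ) * (starRingEnd ℂ w))).re = x * Complex.normSq w := by
      rw [show w * ((x : ℂ) * (starRingEnd ℂ w)) = (x:ℂ) * (w * (starRingEnd ℂ w)) by ring,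
        Complex.mul_conj]
      rw [← Complex.ofReal_mul, Complex.ofReal_re]
    simp only [Set.mem_setOf_eq, this]
    exact mul_pos hx (Complex.normSq_pos.mpr hw)
  exact Set.Infinite.mono hsub ((Set.Ioi_infinite 0).image hinj)

lemma exists_eval_ne_zero (w : ℂ) (hw : w ≠ 0) (m : ℕ) (p : MvPolynomial (Fin m) ℂ) (hp : p ≠ 0) :
    ∃ y : Fin m → ℂ, (∀ i, 0 < (w * y i).re) ∧ eval y p ≠ 0 := by
  induction m with
  | zero =>
    refine ⟨fun i => i.elim0, fun i => i.elim0, ?_⟩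
    rw [eq_C_of_isEmpty p, eval_C]
    intro h
    exact hp (by rw [eq_C_of_isEmpty p, h, map_zero])
  | succ m ih =>
    set Q := finSuccEquiv ℂ m p with hQ
    have hQne : Q ≠ 0 := by
      intro h
      exact hp ((map_eq_zero_iff _ (finSuccEquiv ℂ m).injective).mp h)
    have hc : Q.leadingCoeff ≠ 0 := Polynomial.leadingCoeff_ne_zero.mpr hQne
    obtain ⟨yt, hyt, hyc⟩ := ih Q.leadingCoeff hc
    set q := Q.map (eval yt) with hq
    have hqne : q ≠ 0 := by
      intro h
      have : q.coeff Q.natDegree = 0 := by rw [h]; simp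
      rw [hq, Polynomial.coeff_map] at this
      exact hyc this
    obtain ⟨t, ht⟩ := ((halfplane_infinite w hw).diff
      (Polynomial.finite_setOf_isRoot hqne)).nonempty
    refine ⟨Fin.cons t yt, ?_, ?_⟩
    · intro i
      induction i using Fin.cases with
      | zero => exact ht.1
      | succ j => simpa using hyt j
    · rw [eval_eq_eval_mv_eval']
      exact fun h => ht.2 h

lemma min_modulus (p : Polynomial ℂ) {r : ℝ} (hr : 0 < r)
    (h : ∀ x ∈ closedBall (0:ℂ) r, p.eval x ≠ 0) :
    ∃ x ∈ sphere (0:ℂ) r, ‖p.eval x‖ ≤ ‖p.eval 0‖ := by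
  set g : ℂ → ℂ := fun x => (p.eval x)⁻¹ with hg
  have hcont : ContinuousOn g (closedBall (0:ℂ) r) :=
    (p.continuous.continuousOn).inv₀ (fun x hx => h x hx)
  have hcs : IsCompact (sphere (0:ℂ) r) := isCompact_sphere _ _
  have hnes : (sphere (0:ℂ) r).Nonempty := NormedSpace.sphere_nonempty.mpr hr.le
  obtain ⟨x₀, hx₀s, hx₀⟩ := hcs.exists_isMaxOn hnes
    ((hcont.mono sphere_subset_closedBall).norm)
  rw [isMaxOn_iff] at hx₀
  have hdc : DiffContOnCl ℂ g (ball (0:ℂ) r) := by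
    constructor
    · exact (p.differentiable.differentiableOn).inv
        (fun x hx => h x (ball_subset_closedBall hx))
    · rw [closure_ball (0:ℂ) hr.ne']
      exact hcont
  have key : ‖g 0‖ ≤ ‖g x₀‖ := by
    apply Complex.norm_le_of_forall_mem_frontier_norm_le isBounded_ball hdc
    · intro z hz
      rw [frontier_ball (0:ℂ) hr.ne'] at hz
      exact hx₀ z hz
    · rw [closure_ball (0:ℂ) hr.ne']
      exact mem_closedBall_self hr.le
  refine ⟨x₀, hx₀s, ?_⟩
  have h0 : 0 < ‖p.eval 0‖ := norm_pos_iff.mpr (h 0 (mem_closedBall_self hr.le))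
  have hx : 0 < ‖p.eval x₀‖ :=
    norm_pos_iff.mpr (h x₀ (sphere_subset_closedBall hx₀s))
  rw [hg] at key
  simp only [norm_inv] at key
  exact (inv_le_inv₀ h0 hx).mp key

lemma exists_small_t (w : ℂ) (hw : w ≠ 0) (ε : ℝ) (hε : 0 < ε) :
    ∃ t : ℂ, t ≠ 0 ∧ ‖t‖ = ε ∧ 0 < (w * t⁻¹).re := by
  have hwpos : (0:ℝ) < ‖w‖ := norm_pos_iff.mpr hw
  refine ⟨((ε * ‖w‖ : ℝ) : ℂ) * (starRingEnd ℂ w)⁻¹, ?_, ?_, ?_⟩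
  · apply mul_ne_zero
    · simp only [ne_eq, Complex.ofReal_eq_zero]
      positivity
    · simp [hw]
  · rw [norm_mul, norm_inv, Complex.norm_real, RCLike.norm_conj, Real.norm_eq_abs,
      abs_of_pos (mul_pos hε hwpos), mul_assoc, mul_inv_cancel₀ (ne_of_gt hwpos), mul_one]
  · rw [mul_inv, inv_inv]
    have hne : ((ε * ‖w‖ : ℝ) : ℂ) ≠ 0 := by
      simp only [ne_eq, Complex.ofReal_eq_zero]
      positivity
    rw [show w * ((((ε * ‖w‖ : ℝ) : ℂ))⁻¹ * starRingEnd ℂ w)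
        = (((ε * ‖w‖ : ℝ) : ℂ))⁻¹ * (w * starRingEnd ℂ w) by ring,
      Complex.mul_conj, ← Complex.ofReal_inv, ← Complex.ofReal_mul, Complex.ofReal_re]
    have h1 := Complex.normSq_pos.mpr hw
    positivity

lemma leadCoeff_ne_zero_on_halfplane {n : ℕ} (w : ℂ) (hw : w ≠ 0)
    (f : MvPolynomial (Fin (n + 1)) ℂ)
    (hf : ∀ z : Fin (n + 1) → ℂ, (∀ i, 0 < (w * z i).re) → eval z f ≠ 0)
    (y : Fin n → ℂ) (hy : ∀ i, 0 < (w * y i).re) :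
    eval y (finSuccEquiv ℂ n f).leadingCoeff ≠ 0 := by
  have hww : 0 < (w * starRingEnd ℂ w).re := by
    rw [Complex.mul_conj]
    simpa using Complex.normSq_pos.mpr hw
  have hfne : f ≠ 0 := by
    intro h0
    exact hf (fun _ => starRingEnd ℂ w) (fun _ => hww) (by rw [h0, map_zero])
  set P := finSuccEquiv ℂ n f with hP
  have hPne : P ≠ 0 := fun h =>
    hfne ((map_eq_zero_iff _ (finSuccEquiv ℂ n).injective).mp h)
  set d := P.natDegree with hd
  have hlc : P.coeff d ≠ 0 := by
    rw [hd, ← Polynomial.leadingCoeff]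
    exact Polynomial.leadingCoeff_ne_zero.mpr hPne
  rw [Polynomial.leadingCoeff]
  by_contra hy0
  -- generic point
  obtain ⟨y', hy', hy'c⟩ := exists_eval_ne_zero w hw n (P.coeff d) hlc
  set v : Fin n → ℂ := fun i => y' i - y i with hv
  set G : Fin n → Polynomial ℂ := fun i => Polynomial.C (y i) + Polynomial.X * Polynomial.C (v i)
    with hG
  set g : ℕ → Polynomial ℂ := fun k => MvPolynomial.aeval G (P.coeff k) with hg
  have eval_g : ∀ (k : ℕ) (l : ℂ),
      (g k).eval l = eval (fun i => y i + l * v i) (P.coeff k) := by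
    intro k l
    have h1 : (g k).eval l = ((Polynomial.aeval l).comp (MvPolynomial.aeval G)) (P.coeff k) := by
      simp [hg, AlgHom.comp_apply, Polynomial.coe_aeval_eq_eval]
    rw [h1, MvPolynomial.comp_aeval]
    have h2 : (fun i => Polynomial.aeval l (G i)) = fun i => y i + l * v i := by
      funext i
      simp [hG]
      ring
    rw [h2, ← MvPolynomial.coe_aeval_eq_eval]
    rfl
  -- radius within which the segment stays in the half-plane
  have hrex : ∃ r : ℝ, 0 < r ∧ ∀ l : ℂ, ‖l‖ ≤ r → ∀ i, 0 < (w * (y i + l * v i)).re := by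
    set ρ : Fin n → ℝ := fun i => (w * y i).re / (‖w‖ * ‖v i‖ + 1) with hρ
    have hρpos : ∀ i, 0 < ρ i := by
      intro i
      apply div_pos (hy i)
      positivity
    set Fs : Finset ℝ := insert 1 (Finset.univ.image ρ) with hFs
    have hFsne : Fs.Nonempty := ⟨1, by simp [hFs]⟩
    refine ⟨Fs.min' hFsne, ?_, ?_⟩
    · rcases Finset.mem_insert.mp (Fs.min'_mem hFsne) with h | h
      · rw [h]; norm_num
      · obtain ⟨i, _, hi⟩ := Finset.mem_image.mp h
        rw [← hi]; exact hρpos i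
    · intro l hl i
      have hle : Fs.min' hFsne ≤ ρ i := Finset.min'_le _ _ (by simp [hFs])
      have hll : ‖l‖ ≤ ρ i := le_trans hl hle
      have h1 : (w * (y i + l * v i)).re = (w * y i).re + (w * (l * v i)).re := by
        rw [mul_add, Complex.add_re]
      have h2 : |(w * (l * v i)).re| ≤ ‖w‖ * (‖l‖ * ‖v i‖) := by
        calc |(w * (l * v i)).re| ≤ ‖w * (l * v i)‖ := Complex.abs_re_le_norm _
        _ = ‖w‖ * (‖l‖ * ‖v i‖) := by rw [norm_mul, norm_mul]
      have h3 : ‖w‖ * (‖l‖ * ‖v i‖) ≤ ρ i * (‖w‖ * ‖v i‖) := by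
        have := mul_le_mul_of_nonneg_left hll (by positivity : (0:ℝ) ≤ ‖w‖ * ‖v i‖)
        calc ‖w‖ * (‖l‖ * ‖v i‖) = (‖w‖ * ‖v i‖) * ‖l‖ := by ring
        _ ≤ (‖w‖ * ‖v i‖) * ρ i := by
            exact mul_le_mul_of_nonneg_left hll (by positivity)
        _ = ρ i * (‖w‖ * ‖v i‖) := by ring
      have h4 : ρ i * (‖w‖ * ‖v i‖) < (w * y i).re := by
        rw [hρ]
        have hpos : (0:ℝ) < ‖w‖ * ‖v i‖ + 1 := by positivity
        rw [div_mul_eq_mul_div, div_lt_iff₀ hpos]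
        have : (0:ℝ) < (w * y i).re := hy i
        nlinarith [norm_nonneg w, norm_nonneg (v i)]
      have h5 : -(‖w‖ * (‖l‖ * ‖v i‖)) ≤ (w * (l * v i)).re := (abs_le.mp h2).1
      rw [h1]
      linarith
  obtain ⟨r, hr, hmem⟩ := hrex
  set Γ : Polynomial ℂ := g d with hΓ
  have hΓ0 : Γ.eval 0 = 0 := by
    rw [hΓ, eval_g]
    have : (fun i => y i + (0:ℂ) * v i) = y := by funext i; simp
    rw [this]
    exact hy0
  have hΓne : Γ ≠ 0 := by
    intro h0
    apply hy'c
    have h1 := eval_g d 1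
    rw [hΓ] at h0
    rw [h0] at h1
    have hfun : (fun i => y i + (1:ℂ) * v i) = y' := by
      funext i
      rw [hv]
      ring
    rw [hfun] at h1
    simpa using h1.symm
  obtain ⟨r', hr'0, hr'le, hr'root⟩ :
      ∃ r' : ℝ, 0 < r' ∧ r' ≤ r ∧ ∀ x : ℂ, ‖x‖ = r' → Γ.eval x ≠ 0 := by
    have hfin : Set.Finite (norm '' {x : ℂ | Γ.IsRoot x}) :=
      (Polynomial.finite_setOf_isRoot hΓne).image _
    obtain ⟨r', hr'⟩ := ((Set.Ioc_infinite hr).diff hfin).nonempty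
    refine ⟨r', hr'.1.1, hr'.1.2, ?_⟩
    intro x hx h0
    exact hr'.2 ⟨x, h0, hx⟩
  have hsne : (sphere (0:ℂ) r').Nonempty := NormedSpace.sphere_nonempty.mpr hr'0.le
  obtain ⟨xm, hxm, hmmin⟩ := (isCompact_sphere (0:ℂ) r').exists_isMinOn hsne
    ((Γ.continuous.norm).continuousOn)
  rw [isMinOn_iff] at hmmin
  set m := ‖Γ.eval xm‖ with hm
  have hmpos : 0 < m :=
    norm_pos_iff.mpr (hr'root xm (mem_sphere_zero_iff_norm.mp hxm))
  set A := ∑ k ∈ Finset.range (d+1), ‖(g k).eval 0‖ with hA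
  have hA0 : 0 ≤ A := Finset.sum_nonneg (fun k _ => norm_nonneg _)
  have hcontB : ContinuousOn (fun x : ℂ => ∑ k ∈ Finset.range (d+1), ‖(g k).eval x‖)
      (sphere (0:ℂ) r') := by
    apply Continuous.continuousOn
    exact continuous_finset_sum _ (fun k _ => ((g k).continuous).norm)
  obtain ⟨xB, hxB, hBmax⟩ := (isCompact_sphere (0:ℂ) r').exists_isMaxOn hsne hcontB
  rw [isMaxOn_iff] at hBmax
  set B := ∑ k ∈ Finset.range (d+1), ‖(g k).eval xB‖ with hB
  have hB0 : 0 ≤ B := Finset.sum_nonneg (fun k _ => norm_nonneg _)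
  clear_value m A B
  -- the small parameter
  obtain ⟨ε, hεpos, hεle1, hεsmall⟩ : ∃ ε : ℝ, 0 < ε ∧ ε ≤ 1 ∧ ε * (A + B) < m := by
    refine ⟨min 1 (m / (A + B + 1)) / 2, ?_, ?_, ?_⟩
    · have := div_pos hmpos (show (0:ℝ) < A + B + 1 by linarith)
      have := lt_min one_pos this
      linarith
    · have h1 : min 1 (m / (A + B + 1)) ≤ 1 := min_le_left _ _
      linarith
    · have h2 : min 1 (m / (A + B + 1)) ≤ m / (A + B + 1) := min_le_right _ _
      have h3 : 0 ≤ min 1 (m / (A + B + 1)) / 2 :=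
        le_of_lt (by
          have := div_pos hmpos (show (0:ℝ) < A + B + 1 by linarith)
          have := lt_min one_pos this
          linarith)
      have h4 : min 1 (m / (A + B + 1)) / 2 * (A + B) ≤ m / (A + B + 1) / 2 * (A + B) := by
        apply mul_le_mul_of_nonneg_right _ (by linarith)
        linarith
      have h5 : m / (A + B + 1) / 2 * (A + B) < m := by
        rw [div_div, div_mul_eq_mul_div, div_lt_iff₀ (by linarith)]
        nlinarith
      linarith
  obtain ⟨t, ht0, htnorm, htinv⟩ := exists_small_t w hw ε hεpos
  have htle1 : ‖t‖ ≤ 1 := by rw [htnorm]; exact hεle1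
  set Ψ : Polynomial ℂ := ∑ k ∈ Finset.range (d+1), Polynomial.C (t^(d-k)) * g k with hΨ
  have hΨeval : ∀ x : ℂ, Ψ.eval x = ∑ k ∈ Finset.range (d+1), t^(d-k) * (g k).eval x := by
    intro x
    rw [hΨ, Polynomial.eval_finset_sum]
    exact Finset.sum_congr rfl (fun k _ => by rw [Polynomial.eval_mul, Polynomial.eval_C])
  have hΨne : ∀ x ∈ closedBall (0:ℂ) r', Ψ.eval x ≠ 0 := by
    intro x hx
    have hxr : ‖x‖ ≤ r := le_trans (mem_closedBall_zero_iff.mp hx) hr'le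
    set φ : Polynomial ℂ := P.map (eval (fun i => y i + x * v i)) with hφ
    have hφdeg : φ.natDegree < d + 1 :=
      lt_of_le_of_lt Polynomial.natDegree_map_le (lt_add_one d)
    have hφeval : Polynomial.eval t⁻¹ φ =
        ∑ k ∈ Finset.range (d+1), eval (fun i => y i + x * v i) (P.coeff k) * (t⁻¹)^k := by
      rw [Polynomial.eval_eq_sum_range' hφdeg]
      exact Finset.sum_congr rfl (fun k _ => by rw [hφ, Polynomial.coeff_map])
    have hstab : Polynomial.eval t⁻¹ φ ≠ 0 := by
      rw [hφ, hP, ← eval_eq_eval_mv_eval']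
      apply hf
      intro i
      induction i using Fin.cases with
      | zero => simpa using htinv
      | succ j => simpa using hmem x hxr j
    have hid : Ψ.eval x = t^d * Polynomial.eval t⁻¹ φ := by
      rw [hΨeval, hφeval, Finset.mul_sum]
      apply Finset.sum_congr rfl
      intro k hk
      have hkd : k ≤ d := Nat.lt_succ_iff.mp (Finset.mem_range.mp hk)
      rw [eval_g]
      rw [show t^d * (eval (fun i => y i + x * v i) (P.coeff k) * (t⁻¹)^k)
          = (t^d * (t^k)⁻¹) * eval (fun i => y i + x * v i) (P.coeff k) by
            rw [inv_pow]; ring,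
        ← pow_sub₀ t ht0 hkd]
    rw [hid]
    exact mul_ne_zero (pow_ne_zero d ht0) hstab
  obtain ⟨x₁, hx₁, hx₁le⟩ := min_modulus Ψ hr'0 hΨne
  -- upper bound for the center value
  have hub : ‖Ψ.eval 0‖ ≤ ‖t‖ * A := by
    rw [hΨeval]
    calc ‖∑ k ∈ Finset.range (d+1), t^(d-k) * (g k).eval 0‖
        ≤ ∑ k ∈ Finset.range (d+1), ‖t^(d-k) * (g k).eval 0‖ := norm_sum_le _ _
      _ ≤ ∑ k ∈ Finset.range (d+1), ‖t‖ * ‖(g k).eval 0‖ := by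
          apply Finset.sum_le_sum
          intro k hk
          rw [norm_mul, norm_pow]
          rcases eq_or_ne k d with hkd | hkd
          · rw [hkd, show (g d).eval 0 = 0 from hΓ0]
            simp
          · have hkd' : k < d := by
              have := Nat.lt_succ_iff.mp (Finset.mem_range.mp hk)
              omega
            apply mul_le_mul_of_nonneg_right _ (norm_nonneg _)
            calc ‖t‖^(d-k) ≤ ‖t‖^1 :=
                  pow_le_pow_of_le_one (norm_nonneg t) htle1 (by omega)
              _ = ‖t‖ := pow_one _
      _ = ‖t‖ * A := by rw [hA, Finset.mul_sum]
  -- lower bound on the sphere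
  have hlb : m - ‖t‖ * B ≤ ‖Ψ.eval x₁‖ := by
    have hsplit : Ψ.eval x₁ =
        (∑ k ∈ Finset.range d, t^(d-k) * (g k).eval x₁) + Γ.eval x₁ := by
      rw [hΨeval, Finset.sum_range_succ, Nat.sub_self, pow_zero, one_mul, hΓ]
    have hdiff : ‖∑ k ∈ Finset.range d, t^(d-k) * (g k).eval x₁‖ ≤ ‖t‖ * B := by
      calc ‖∑ k ∈ Finset.range d, t^(d-k) * (g k).eval x₁‖
          ≤ ∑ k ∈ Finset.range d, ‖t^(d-k) * (g k).eval x₁‖ := norm_sum_le _ _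
        _ ≤ ∑ k ∈ Finset.range d, ‖t‖ * ‖(g k).eval x₁‖ := by
            apply Finset.sum_le_sum
            intro k hk
            have hkd : k < d := Finset.mem_range.mp hk
            rw [norm_mul, norm_pow]
            apply mul_le_mul_of_nonneg_right _ (norm_nonneg _)
            calc ‖t‖^(d-k) ≤ ‖t‖^1 :=
                  pow_le_pow_of_le_one (norm_nonneg t) htle1 (by omega)
              _ = ‖t‖ := pow_one _
        _ = ‖t‖ * ∑ k ∈ Finset.range d, ‖(g k).eval x₁‖ := by rw [Finset.mul_sum]
        _ ≤ ‖t‖ * ∑ k ∈ Finset.range (d+1), ‖(g k).eval x₁‖ := by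
            apply mul_le_mul_of_nonneg_left _ (norm_nonneg t)
            apply Finset.sum_le_sum_of_subset_of_nonneg
            · exact Finset.range_subset_range.mpr (by omega)
            · intro k _ _; exact norm_nonneg _
        _ ≤ ‖t‖ * B := by
            apply mul_le_mul_of_nonneg_left _ (norm_nonneg t)
            exact hBmax x₁ hx₁
    have hmx : m ≤ ‖Γ.eval x₁‖ := hmmin x₁ hx₁
    have : ‖Γ.eval x₁‖ ≤ ‖∑ k ∈ Finset.range d, t^(d-k) * (g k).eval x₁‖ + ‖Ψ.eval x₁‖ := by
      rw [show Γ.eval x₁ = Ψ.eval x₁ - ∑ k ∈ Finset.range d, t^(d-k) * (g k).eval x₁ by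
        rw [hsplit]; ring]
      calc ‖Ψ.eval x₁ - ∑ k ∈ Finset.range d, t^(d-k) * (g k).eval x₁‖
          ≤ ‖Ψ.eval x₁‖ + ‖∑ k ∈ Finset.range d, t^(d-k) * (g k).eval x₁‖ := norm_sub_le _ _
        _ = _ := by ring
    linarith
  -- final contradiction
  have : m ≤ ‖t‖ * A + ‖t‖ * B := by linarith
  rw [← mul_add, htnorm] at this
  linarith


/-- If `f ∈ ℂ[z₁,…,zₙ]` is `H`-stable for an open half-plane
`H = {z | 0 < (w * z).re}` (with `w ≠ 0`) whose boundary contains the origin,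
then `∂f/∂z₁` is either identically zero or `H`-stable. -/
theorem stmt_0 {n : ℕ} (w : ℂ) (hw : w ≠ 0) (f : MvPolynomial (Fin (n + 1)) ℂ)
    (hf : ∀ z : Fin (n + 1) → ℂ, (∀ i, 0 < (w * z i).re) → eval z f ≠ 0) :
    pderiv (0 : Fin (n + 1)) f = 0 ∨
      ∀ z : Fin (n + 1) → ℂ, (∀ i, 0 < (w * z i).re) →
        eval z (pderiv (0 : Fin (n + 1)) f) ≠ 0 := by
  set P := finSuccEquiv ℂ n f with hP
  by_cases hd : Polynomial.derivative P = 0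
  · left
    have h0 : finSuccEquiv ℂ n (pderiv 0 f) = 0 := by
      rw [finSuccEquiv_pderiv_zero, ← hP, hd]
    exact (map_eq_zero_iff _ (finSuccEquiv ℂ n).injective).mp h0
  · right
    intro z hz
    set y : Fin n → ℂ := Fin.tail z with hy
    have hyH : ∀ i, 0 < (w * y i).re := fun i => hz i.succ
    have hd1 : 1 ≤ P.natDegree := by
      by_contra h
      push_neg at h
      have h0 : P.natDegree = 0 := by omega
      obtain ⟨a, ha⟩ := Polynomial.natDegree_eq_zero.mp h0
      exact hd (by rw [← ha, Polynomial.derivative_C])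
    have hlc := leadCoeff_ne_zero_on_halfplane w hw f hf y hyH
    set φ := P.map (eval y) with hφ
    have hφdeg : 1 ≤ φ.natDegree := by
      have hcoeff : φ.coeff P.natDegree ≠ 0 := by
        rw [hφ, Polynomial.coeff_map]
        exact hlc
      have hle : P.natDegree ≤ φ.natDegree := Polynomial.le_natDegree_of_ne_zero hcoeff
      omega
    have hφst : ∀ s : ℂ, 0 < (w * s).re → φ.eval s ≠ 0 := by
      intro s hs
      rw [hφ, hP, ← eval_eq_eval_mv_eval']
      apply hf
      intro i
      induction i using Fin.cases with
      | zero => simpa using hs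
      | succ j => simpa using hyH j
    have hder := univ_deriv_stable w φ hφst hφdeg (hz 0)
    have hkey : eval z (pderiv (0 : Fin (n + 1)) f) = (Polynomial.derivative φ).eval (z 0) := by
      have hz' : eval z (pderiv (0 : Fin (n + 1)) f)
          = eval (Fin.cons (z 0) (Fin.tail z)) (pderiv (0 : Fin (n + 1)) f) := by
        rw [Fin.cons_self_tail]
      rw [hz', eval_eq_eval_mv_eval', finSuccEquiv_pderiv_zero, ← hP, ← hy, ← Polynomial.derivative_map, ← hφ]
    rw [hkey]
    exact hder
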